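/- Let s ≥ 1 be a natural number and let G be a finite simple graph whose edge set partitions into four classes according to the degrees of the endpoints: 4 edges whose endpoints have degrees 1 and 4; 12(s − 1) edges whose endpoints have degrees 2 and 4; 6(s² − 3s + 2) edges whose endpoints have degrees 3 and 4; and (2s³ − 12s² + 22s − 12)/3 edges whose endpoints have degrees 4 and 4. Let IN₂ = 8/√5 + (24/√3)·(s − 1) + (12√3/√7)·(s² − 3s + 2) + (√8/3)·(s³ − 6s² + 11s − 6) be the second inverse Nirmala index of G. Then the second inverse Nirmala entropy of G satisfies ENT_{IN₂}(G) = log(IN₂) − (1/IN₂)·[(8/√5)·log(2/√5) + 12(s − 1)·(√8/√6)·log(√8/√6) + 6(s² − 3s + 2)·(√12/√7)·log(√12/√7) + ((2s³ − 12s² + 22s − 12)/3)·√2·log(√2)]. -/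

import Mathlib

open Finset

private lemma quad_nonneg' (n : ℕ) : 0 ≤ ((n:ℝ)^2 - 3*n + 2) := by
  rcases lt_or_ge n 2 with h | h
  · interval_cases n <;> norm_num
  · have h2 : (2:ℝ) ≤ (n:ℝ) := by exact_mod_cast h
    nlinarith

private lemma cubic_nonneg' (n : ℕ) (hn : 1 ≤ n) : 0 ≤ ((n:ℝ)^3 - 6*(n:ℝ)^2 + 11*n - 6) := by
  have e : (n:ℝ)^3 - 6*(n:ℝ)^2 + 11*n - 6 = ((n:ℝ)-1)*((n:ℝ)-2)*((n:ℝ)-3) := by ring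
  rw [e]
  rcases lt_or_ge n 3 with h | h
  · interval_cases n <;> norm_num
  · have h3 : (3:ℝ) ≤ (n:ℝ) := by exact_mod_cast h
    apply mul_nonneg (mul_nonneg (by linarith) (by linarith)) (by linarith)

theorem second_inverse_nirmala_entropy_diamond {V : Type*} [Fintype V] [DecidableEq V]
    (G : SimpleGraph V) [DecidableRel G.Adj] (n : ℕ) (hn : 1 ≤ n)
    (h1 : ((G.edgeFinset.filter (fun e => Sym2.map (fun v => G.degree v) e = s(1, 4))).card : ℝ) = 4)
    (h2 : ((G.edgeFinset.filter (fun e => Sym2.map (fun v => G.degree v) e = s(2, 4))).card : ℝ)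
        = 12 * ((n : ℝ) - 1))
    (h3 : ((G.edgeFinset.filter (fun e => Sym2.map (fun v => G.degree v) e = s(3, 4))).card : ℝ)
        = 6 * ((n : ℝ) ^ 2 - 3 * n + 2))
    (h4 : ((G.edgeFinset.filter (fun e => Sym2.map (fun v => G.degree v) e = s(4, 4))).card : ℝ)
        = (2 * (n : ℝ) ^ 3 - 12 * (n : ℝ) ^ 2 + 22 * n - 12) / 3)
    (hall : ∀ e ∈ G.edgeFinset,
        Sym2.map (fun v => G.degree v) e = s(1, 4) ∨ Sym2.map (fun v => G.degree v) e = s(2, 4) ∨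
        Sym2.map (fun v => G.degree v) e = s(3, 4) ∨ Sym2.map (fun v => G.degree v) e = s(4, 4))
    (IN₂ : ℝ)
    (hIN₂ : IN₂ = 8 / Real.sqrt 5 + (24 / Real.sqrt 3) * ((n : ℝ) - 1)
        + (12 * Real.sqrt 3 / Real.sqrt 7) * ((n : ℝ) ^ 2 - 3 * n + 2)
        + (Real.sqrt 8 / 3) * ((n : ℝ) ^ 3 - 6 * (n : ℝ) ^ 2 + 11 * n - 6)) :
    -∑ e ∈ G.edgeFinset,
        (Sym2.lift ⟨fun u v => Real.sqrt ((G.degree u : ℝ) * (G.degree v : ℝ)) /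
            Real.sqrt ((G.degree u : ℝ) + (G.degree v : ℝ)),
          fun u v => by dsimp only; rw [mul_comm, add_comm]⟩ e / IN₂) *
          Real.log (Sym2.lift ⟨fun u v => Real.sqrt ((G.degree u : ℝ) * (G.degree v : ℝ)) /
            Real.sqrt ((G.degree u : ℝ) + (G.degree v : ℝ)),
          fun u v => by dsimp only; rw [mul_comm, add_comm]⟩ e / IN₂)
      = Real.log IN₂ - (1 / IN₂) *
          ((8 / Real.sqrt 5) * Real.log (2 / Real.sqrt 5)
            + 12 * ((n : ℝ) - 1) * (Real.sqrt 8 / Real.sqrt 6) *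
                Real.log (Real.sqrt 8 / Real.sqrt 6)
            + 6 * ((n : ℝ) ^ 2 - 3 * n + 2) * (Real.sqrt 12 / Real.sqrt 7) *
                Real.log (Real.sqrt 12 / Real.sqrt 7)
            + ((2 * (n : ℝ) ^ 3 - 12 * (n : ℝ) ^ 2 + 22 * n - 12) / 3) * Real.sqrt 2 *
                Real.log (Real.sqrt 2)) := by
  classical
  set F : Sym2 V → ℝ := Sym2.lift ⟨fun u v => Real.sqrt ((G.degree u : ℝ) * (G.degree v : ℝ)) /
            Real.sqrt ((G.degree u : ℝ) + (G.degree v : ℝ)),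
          fun u v => by dsimp only; rw [mul_comm, add_comm]⟩ with hF
  -- value of F on a fiber
  have key : ∀ (a b : ℕ) (e : Sym2 V), Sym2.map (fun v => G.degree v) e = s(a, b) →
      F e = Real.sqrt ((a : ℝ) * (b : ℝ)) / Real.sqrt ((a : ℝ) + (b : ℝ)) := by
    intro a b e
    induction e using Sym2.ind with
    | _ u v =>
      intro h
      rw [Sym2.map_pair_eq, Sym2.eq_iff] at h
      rcases h with ⟨ha, hb⟩ | ⟨ha, hb⟩ <;>
        simp only [hF, Sym2.lift_mk, ha, hb] <;> rw [mul_comm, add_comm]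
  have hmaps : ∀ e ∈ G.edgeFinset, Sym2.map (fun v => G.degree v) e ∈
      ({s(1, 4), s(2, 4), s(3, 4), s(4, 4)} : Finset (Sym2 ℕ)) := by
    intro e he
    rcases hall e he with h | h | h | h <;> simp [h]
  rw [← Finset.sum_fiberwise_of_maps_to hmaps (fun e => F e / IN₂ * Real.log (F e / IN₂))]
  rw [Finset.sum_insert (by decide), Finset.sum_insert (by decide),
    Finset.sum_insert (by decide), Finset.sum_singleton]
  have inner : ∀ (a b : ℕ),
      ∑ e ∈ G.edgeFinset.filter (fun e => Sym2.map (fun v => G.degree v) e = s(a, b)),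
        (F e / IN₂ * Real.log (F e / IN₂))
      = ((G.edgeFinset.filter (fun e => Sym2.map (fun v => G.degree v) e = s(a, b))).card : ℝ)
        * ((Real.sqrt ((a : ℝ) * (b : ℝ)) / Real.sqrt ((a : ℝ) + (b : ℝ))) / IN₂ *
            Real.log ((Real.sqrt ((a : ℝ) * (b : ℝ)) / Real.sqrt ((a : ℝ) + (b : ℝ))) / IN₂)) := by
    intro a b
    rw [Finset.sum_congr rfl (fun e he => ?_), Finset.sum_const, nsmul_eq_mul]
    rw [key a b e (Finset.mem_filter.mp he).2]
  rw [inner 1 4, inner 2 4, inner 3 4, inner 4 4, h1, h2, h3, h4]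
  -- numeric simplification of the square roots
  have s4 : Real.sqrt 4 = 2 := by
    rw [show (4:ℝ) = 2^2 by norm_num, Real.sqrt_sq (by norm_num)]
  have w1 : Real.sqrt ((1:ℝ) * 4) / Real.sqrt ((1:ℝ) + 4) = 2 / Real.sqrt 5 := by
    norm_num [s4]
  have w2 : Real.sqrt ((2:ℝ) * 4) / Real.sqrt ((2:ℝ) + 4) = Real.sqrt 8 / Real.sqrt 6 := by
    norm_num
  have w3 : Real.sqrt ((3:ℝ) * 4) / Real.sqrt ((3:ℝ) + 4) = Real.sqrt 12 / Real.sqrt 7 := by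
    norm_num
  have w4 : Real.sqrt ((4:ℝ) * 4) / Real.sqrt ((4:ℝ) + 4) = Real.sqrt 2 := by
    norm_num
    rw [div_eq_iff (by positivity), ← Real.sqrt_mul (show (0:ℝ) ≤ 2 by norm_num) 8,
      show (2:ℝ) * 8 = 4 ^ 2 by norm_num, Real.sqrt_sq (show (0:ℝ) ≤ 4 by norm_num)]
  push_cast
  rw [w1, w2, w3, w4]
  -- positivity facts
  have h5 : (0:ℝ) < Real.sqrt 5 := Real.sqrt_pos.mpr (by norm_num)
  have h6 : (0:ℝ) < Real.sqrt 6 := Real.sqrt_pos.mpr (by norm_num)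
  have h7 : (0:ℝ) < Real.sqrt 7 := Real.sqrt_pos.mpr (by norm_num)
  have h8 : (0:ℝ) < Real.sqrt 8 := Real.sqrt_pos.mpr (by norm_num)
  have h12 : (0:ℝ) < Real.sqrt 12 := Real.sqrt_pos.mpr (by norm_num)
  have h2' : (0:ℝ) < Real.sqrt 2 := Real.sqrt_pos.mpr (by norm_num)
  have h3' : (0:ℝ) < Real.sqrt 3 := Real.sqrt_pos.mpr (by norm_num)
  have hq : 0 ≤ ((n:ℝ)^2 - 3*n + 2) := quad_nonneg' n
  have hc : 0 ≤ ((n:ℝ)^3 - 6*(n:ℝ)^2 + 11*n - 6) := cubic_nonneg' n hn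
  have hn1 : (1:ℝ) ≤ (n:ℝ) := by exact_mod_cast hn
  have hIpos : 0 < IN₂ := by
    rw [hIN₂]
    have t1 : (0:ℝ) < 8 / Real.sqrt 5 := by positivity
    have t2 : (0:ℝ) ≤ (24 / Real.sqrt 3) * ((n:ℝ) - 1) := by
      apply mul_nonneg (by positivity); linarith
    have t3 : (0:ℝ) ≤ (12 * Real.sqrt 3 / Real.sqrt 7) * ((n:ℝ)^2 - 3*n + 2) := by
      apply mul_nonneg (by positivity) hq
    have t4 : (0:ℝ) ≤ (Real.sqrt 8 / 3) * ((n:ℝ)^3 - 6*(n:ℝ)^2 + 11*n - 6) := by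
      apply mul_nonneg (by positivity) hc
    linarith
  have hIne : IN₂ ≠ 0 := ne_of_gt hIpos
  -- the total weight equals IN₂
  have hs86 : Real.sqrt 8 / Real.sqrt 6 = 2 / Real.sqrt 3 := by
    rw [← Real.sqrt_div (by norm_num), show (8:ℝ)/6 = 4/3 by norm_num,
      Real.sqrt_div (by norm_num), s4]
  have hs12 : Real.sqrt 12 = 2 * Real.sqrt 3 := by
    rw [show (12:ℝ) = 4*3 by norm_num, Real.sqrt_mul (by norm_num), s4]
  have hs8 : Real.sqrt 8 = 2 * Real.sqrt 2 := by
    rw [show (8:ℝ) = 4*2 by norm_num, Real.sqrt_mul (by norm_num), s4]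
  have hI : 4 * (2 / Real.sqrt 5) + 12 * ((n:ℝ) - 1) * (Real.sqrt 8 / Real.sqrt 6)
      + 6 * ((n:ℝ)^2 - 3*n + 2) * (Real.sqrt 12 / Real.sqrt 7)
      + (2 * (n:ℝ)^3 - 12 * (n:ℝ)^2 + 22*n - 12) / 3 * Real.sqrt 2 = IN₂ := by
    rw [hIN₂, hs86, hs12, hs8]
    ring
  -- expand the logs
  rw [Real.log_div (by positivity) hIne, Real.log_div (by positivity) hIne,
    Real.log_div (by positivity) hIne, Real.log_div (ne_of_gt h2') hIne]
  linear_combination (Real.log IN₂ / IN₂) * hI + Real.log IN₂ * (mul_inv_cancel₀ hIne)
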